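/- Let ρ ∈ (0,1) and let 𝒮 be a random variable on ℕ \ {0} with P(𝒮 = k) = e^{-kρ}(kρ)^{k-1}/k!. Define μ(θ) = λ(E[e^{θ𝒮}] - 1) for λ > 0, defined for those θ where the expectation is finite. Then μ(θ) is finite for θ < ρ - ln ρ - 1, and μ(θ) → 0 as θ → 0⁺. -/

import Mathlib

open MeasureTheory ProbabilityTheory Filter

theorem stmt_14 {Ω : Type*} [MeasurableSpace Ω] (P : Measure Ω) [IsProbabilityMeasure P]
    (ρ lam : ℝ) (hρ : ρ ∈ Set.Ioo (0 : ℝ) 1) (hlam : 0 < lam)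
    (S : Ω → ℕ) (hmeas : Measurable S)
    (h0 : P {ω | S ω = 0} = 0)
    (hlaw : ∀ k : ℕ, 1 ≤ k →
      P {ω | S ω = k} =
        ENNReal.ofReal (Real.exp (-(k : ℝ) * ρ) * ((k : ℝ) * ρ) ^ (k - 1) / k.factorial)) :
    (∀ θ : ℝ, θ < ρ - Real.log ρ - 1 →
        Integrable (fun ω => Real.exp (θ * (S ω : ℝ))) P) ∧
      Tendsto (fun θ : ℝ => lam * ((∫ ω, Real.exp (θ * (S ω : ℝ)) ∂P) - 1))
        (nhdsWithin 0 (Set.Ioi 0)) (nhds 0) := by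
  obtain ⟨hρ0, hρ1⟩ := hρ
  have hmeasR : ∀ θ : ℝ, Measurable fun ω => Real.exp (θ * (S ω : ℝ)) := by
    intro θ
    exact Real.measurable_exp.comp (measurable_const.mul (measurable_from_nat.comp hmeas))
  have hmap : ∀ n : ℕ, (P.map S) {n} = P {ω | S ω = n} := by
    intro n
    rw [Measure.map_apply hmeas (measurableSet_singleton n)]
    rfl
  -- Part 1: integrability
  have hInt : ∀ θ : ℝ, θ < ρ - Real.log ρ - 1 →
      Integrable (fun ω => Real.exp (θ * (S ω : ℝ))) P := by
    intro θ hθ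
    set r : ℝ := Real.exp (θ - ρ + 1) * ρ with hr
    have hr0 : 0 < r := mul_pos (Real.exp_pos _) hρ0
    have hr1 : r < 1 := by
      have : Real.exp (θ - ρ + 1) * ρ < Real.exp (ρ - Real.log ρ - 1 - ρ + 1) * ρ := by
        apply mul_lt_mul_of_pos_right _ hρ0
        exact Real.exp_lt_exp.mpr (by linarith)
      calc r < Real.exp (ρ - Real.log ρ - 1 - ρ + 1) * ρ := this
        _ = Real.exp (-Real.log ρ) * ρ := by ring_nf
        _ = 1 := by
            rw [Real.exp_neg, Real.exp_log hρ0]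
            field_simp
    refine ⟨(hmeasR θ).aestronglyMeasurable, ?_⟩
    rw [hasFiniteIntegral_iff_ofReal (Eventually.of_forall fun ω => (Real.exp_pos _).le)]
    have hlint : ∫⁻ ω, ENNReal.ofReal (Real.exp (θ * (S ω : ℝ))) ∂P
        = ∑' n : ℕ, ENNReal.ofReal (Real.exp (θ * (n : ℝ))) * P {ω | S ω = n} := by
      rw [← lintegral_map (f := fun n : ℕ => ENNReal.ofReal (Real.exp (θ * (n : ℝ))))
        (by exact measurable_from_nat) hmeas, lintegral_countable']
      simp_rw [hmap]
    rw [hlint]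
    have hbound : ∀ n : ℕ, ENNReal.ofReal (Real.exp (θ * (n : ℝ))) * P {ω | S ω = n}
        ≤ ENNReal.ofReal ((1 / ρ) * r ^ n) := by
      intro n
      rcases Nat.eq_zero_or_pos n with hn | hn
      · subst hn
        rw [h0, mul_zero]
        exact zero_le
      · rw [hlaw n hn, ← ENNReal.ofReal_mul (Real.exp_pos _).le]
        apply ENNReal.ofReal_le_ofReal
        have hfac : ((n : ℝ)) ^ n / (n.factorial : ℝ) ≤ Real.exp n :=
          Real.pow_div_factorial_le_exp (n : ℝ) (Nat.cast_nonneg n) n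
        have hfacpos : (0 : ℝ) < (n.factorial : ℝ) := by exact_mod_cast n.factorial_pos
        have hnpos : (0 : ℝ) < (n : ℝ) := by exact_mod_cast hn
        have key : ((n : ℝ) * ρ) ^ (n - 1) / (n.factorial : ℝ)
            ≤ Real.exp n * ρ ^ (n - 1) := by
          rw [mul_pow, div_le_iff₀ hfacpos]
          have h1 : ((n : ℝ)) ^ (n - 1) ≤ (n : ℝ) ^ n :=
            pow_le_pow_right₀ (by exact_mod_cast hn) (Nat.sub_le n 1)
          have h2 : ((n : ℝ)) ^ n ≤ Real.exp n * (n.factorial : ℝ) := by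
            rw [← div_le_iff₀ hfacpos] at *
            exact hfac
          have hρpow : (0 : ℝ) ≤ ρ ^ (n - 1) := pow_nonneg hρ0.le _
          calc ((n : ℝ)) ^ (n - 1) * ρ ^ (n - 1)
              ≤ (Real.exp n * (n.factorial : ℝ)) * ρ ^ (n - 1) := by
                apply mul_le_mul_of_nonneg_right (h1.trans h2) hρpow
            _ = Real.exp n * ρ ^ (n - 1) * (n.factorial : ℝ) := by ring
        have hρpow1 : ρ ^ (n - 1) ≤ (1 / ρ) * ρ ^ n := by
          have : ρ ^ n = ρ ^ (n - 1) * ρ := by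
            rw [← pow_succ, Nat.sub_add_cancel hn]
          rw [this]
          field_simp
          norm_num
        calc Real.exp (θ * n) * (Real.exp (-(n : ℝ) * ρ) * ((n : ℝ) * ρ) ^ (n - 1) / n.factorial)
            = Real.exp (θ * n) * Real.exp (-(n : ℝ) * ρ) * (((n : ℝ) * ρ) ^ (n - 1) / n.factorial) := by
              ring
          _ ≤ Real.exp (θ * n) * Real.exp (-(n : ℝ) * ρ) * (Real.exp n * ρ ^ (n - 1)) := by
              apply mul_le_mul_of_nonneg_left key
              positivity
          _ = Real.exp ((θ - ρ + 1) * n) * ρ ^ (n - 1) := by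
              rw [show Real.exp (θ * n) * Real.exp (-(n : ℝ) * ρ) * (Real.exp n * ρ ^ (n - 1))
                  = Real.exp (θ * n) * Real.exp (-(n : ℝ) * ρ) * Real.exp n * ρ ^ (n - 1) by ring,
                ← Real.exp_add, ← Real.exp_add]
              ring_nf
          _ ≤ Real.exp ((θ - ρ + 1) * n) * ((1 / ρ) * ρ ^ n) := by
              apply mul_le_mul_of_nonneg_left hρpow1 (Real.exp_pos _).le
          _ = (1 / ρ) * r ^ n := by
              rw [hr, mul_pow, ← Real.exp_nat_mul]
              ring
    calc ∑' n : ℕ, ENNReal.ofReal (Real.exp (θ * (n : ℝ))) * P {ω | S ω = n}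
        ≤ ∑' n : ℕ, ENNReal.ofReal ((1 / ρ) * r ^ n) := ENNReal.tsum_le_tsum hbound
      _ = ENNReal.ofReal (∑' n : ℕ, (1 / ρ) * r ^ n) := by
          rw [ENNReal.ofReal_tsum_of_nonneg (fun n => by positivity)
            (Summable.mul_left _ (summable_geometric_of_lt_one hr0.le hr1))]
      _ < ⊤ := ENNReal.ofReal_lt_top
  refine ⟨hInt, ?_⟩
  -- Part 2: continuity at 0⁺
  have hpos : 0 < ρ - Real.log ρ - 1 := by
    have := Real.log_lt_sub_one_of_pos hρ0 (ne_of_lt hρ1)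
    linarith
  set θ₀ : ℝ := (ρ - Real.log ρ - 1) / 2 with hθ₀
  have hθ₀pos : 0 < θ₀ := by positivity
  have hθ₀lt : θ₀ < ρ - Real.log ρ - 1 := by
    rw [hθ₀]; linarith
  have hIlim : Tendsto (fun θ : ℝ => ∫ ω, Real.exp (θ * (S ω : ℝ)) ∂P)
      (nhdsWithin 0 (Set.Ioi 0)) (nhds 1) := by
    have h1 : (1 : ℝ) = ∫ ω, (1 : ℝ) ∂P := by simp
    rw [h1]
    apply tendsto_integral_filter_of_dominated_convergence
      (fun ω => Real.exp (θ₀ * (S ω : ℝ)))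
    · exact Eventually.of_forall fun θ => (hmeasR θ).aestronglyMeasurable
    · filter_upwards [Ioo_mem_nhdsGT_of_mem (Set.mem_Ico.mpr ⟨le_refl 0, hθ₀pos⟩)] with θ hθ
      apply Eventually.of_forall
      intro ω
      rw [Real.norm_eq_abs, Real.abs_exp]
      apply Real.exp_le_exp.mpr
      apply mul_le_mul_of_nonneg_right hθ.2.le (Nat.cast_nonneg _)
    · exact hInt θ₀ hθ₀lt
    · apply Eventually.of_forall
      intro ω
      have : Tendsto (fun θ : ℝ => Real.exp (θ * (S ω : ℝ))) (nhds 0)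
          (nhds (Real.exp (0 * (S ω : ℝ)))) := by
        apply Continuous.tendsto
        exact Real.continuous_exp.comp (continuous_id.mul continuous_const)
      simpa using this.mono_left nhdsWithin_le_nhds
  have : Tendsto (fun θ : ℝ => lam * ((∫ ω, Real.exp (θ * (S ω : ℝ)) ∂P) - 1))
      (nhdsWithin 0 (Set.Ioi 0)) (nhds (lam * (1 - 1))) :=
    (hIlim.sub_const 1).const_mul lam
  simpa using this
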